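/- For every real number x with 0 ≤ x ≤ 1, the chain of inequalities 3x/(2 + √(1 − x²)) ≤ 6(√(1 + x) − √(1 − x))/(4 + √(1 + x) + √(1 − x)) ≤ arcsin x ≤ φ(x) ≤ π(√2 + 1/2)·(√(1 + x) − √(1 − x))/(4 + √(1 + x) + √(1 − x)) ≤ πx/(2 + √(1 − x²)) holds, where φ(x) = (π(2 − √2)/(π − 2√2))·(√(1 + x) − √(1 − x)) / (√2(4 − π)/(π − 2√2) + √(1 + x) + √(1 − x)). -/

import Mathlib

open Real Set

/-- The upper bound `φ` for `arcsin` obtained by the λ-method of Mitrinović–Vasić. -/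
noncomputable def phiBound (x : ℝ) : ℝ :=
  (Real.pi * (2 - Real.sqrt 2) / (Real.pi - 2 * Real.sqrt 2)) *
      (Real.sqrt (1 + x) - Real.sqrt (1 - x)) /
    (Real.sqrt 2 * (4 - Real.pi) / (Real.pi - 2 * Real.sqrt 2) +
      Real.sqrt (1 + x) + Real.sqrt (1 - x))

/- ### Generic sign-change lemmas -/

lemma lemA {g : ℝ → ℝ} {a b : ℝ} (hab : a ≤ b) (hg : AntitoneOn g (Set.Icc a b)) (ha : 0 ≤ g a) :
    ∃ c ∈ Set.Icc a b, (∀ x ∈ Set.Ico a c, 0 ≤ g x) ∧ (∀ x ∈ Set.Ioc c b, g x ≤ 0) := by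
  set S := {x ∈ Set.Icc a b | 0 ≤ g x} with hS
  have haS : a ∈ S := ⟨⟨le_refl a, hab⟩, ha⟩
  have hbdd : BddAbove S := ⟨b, fun y hy => hy.1.2⟩
  have hne : S.Nonempty := ⟨a, haS⟩
  have hc1 : a ≤ sSup S := le_csSup hbdd haS
  have hc2 : sSup S ≤ b := csSup_le hne fun y hy => hy.1.2
  refine ⟨sSup S, ⟨hc1, hc2⟩, ?_, ?_⟩
  · intro x hx
    obtain ⟨y, hyS, hxy⟩ := exists_lt_of_lt_csSup hne hx.2
    have hyb : y ∈ Set.Icc a b := hyS.1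
    have : g y ≤ g x := hg ⟨hx.1, hxy.le.trans hyb.2⟩ hyb hxy.le
    linarith [hyS.2]
  · intro x hx
    by_contra h
    push_neg at h
    have hxS : x ∈ S := ⟨⟨hc1.trans hx.1.le, hx.2⟩, h.le⟩
    exact absurd (le_csSup hbdd hxS) (not_le.2 hx.1)

lemma mono_of_deriv {g g' : ℝ → ℝ} (hd : ∀ x, HasDerivAt g (g' x) x) {a b : ℝ}
    (h : ∀ x ∈ Set.Ioo a b, 0 ≤ g' x) : MonotoneOn g (Set.Icc a b) := by
  apply monotoneOn_of_deriv_nonneg (convex_Icc a b)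
  · exact fun x _ => (hd x).continuousAt.continuousWithinAt
  · intro x hx; rw [interior_Icc] at hx
    exact ((hd x).differentiableAt).differentiableWithinAt
  · intro x hx; rw [interior_Icc] at hx; rw [(hd x).deriv]; exact h x hx

lemma anti_of_deriv {g g' : ℝ → ℝ} (hd : ∀ x, HasDerivAt g (g' x) x) {a b : ℝ}
    (h : ∀ x ∈ Set.Ioo a b, g' x ≤ 0) : AntitoneOn g (Set.Icc a b) := by
  apply antitoneOn_of_deriv_nonpos (convex_Icc a b)
  · exact fun x _ => (hd x).continuousAt.continuousWithinAt
  · intro x hx; rw [interior_Icc] at hx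
    exact ((hd x).differentiableAt).differentiableWithinAt
  · intro x hx; rw [interior_Icc] at hx; rw [(hd x).deriv]; exact h x hx

lemma signChange {g g' : ℝ → ℝ} {a b c : ℝ} (hd : ∀ x, HasDerivAt g (g' x) x)
    (hc : c ∈ Set.Icc a b)
    (h1 : ∀ x ∈ Set.Ico a c, 0 ≤ g' x) (h2 : ∀ x ∈ Set.Ioc c b, g' x ≤ 0)
    (hga : 0 ≤ g a) :
    ∃ c' ∈ Set.Icc a b, (∀ x ∈ Set.Ico a c', 0 ≤ g x) ∧ (∀ x ∈ Set.Ioc c' b, g x ≤ 0) := by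
  have hmono : MonotoneOn g (Set.Icc a c) :=
    mono_of_deriv hd fun x hx => h1 x ⟨hx.1.le, hx.2⟩
  have hanti : AntitoneOn g (Set.Icc c b) :=
    anti_of_deriv hd fun x hx => h2 x ⟨hx.1, hx.2.le⟩
  have hgc : 0 ≤ g c := hga.trans (hmono ⟨le_rfl, hc.1⟩ ⟨hc.1, le_rfl⟩ hc.1)
  obtain ⟨c', hc', H1, H2⟩ := lemA hc.2 hanti hgc
  refine ⟨c', ⟨hc.1.trans hc'.1, hc'.2⟩, ?_, H2⟩
  intro x hx
  rcases le_or_gt x c with h | h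
  · exact hga.trans (hmono ⟨le_rfl, hc.1⟩ ⟨hx.1, h⟩ hx.1)
  · exact H1 x ⟨h.le, hx.2⟩

lemma finalNonneg {g g' : ℝ → ℝ} {a b c : ℝ} (hd : ∀ x, HasDerivAt g (g' x) x)
    (hc : c ∈ Set.Icc a b)
    (h1 : ∀ x ∈ Set.Ico a c, 0 ≤ g' x) (h2 : ∀ x ∈ Set.Ioc c b, g' x ≤ 0)
    (hga : 0 ≤ g a) (hgb : 0 ≤ g b) : ∀ x ∈ Set.Icc a b, 0 ≤ g x := by
  have hmono : MonotoneOn g (Set.Icc a c) :=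
    mono_of_deriv hd fun x hx => h1 x ⟨hx.1.le, hx.2⟩
  have hanti : AntitoneOn g (Set.Icc c b) :=
    anti_of_deriv hd fun x hx => h2 x ⟨hx.1, hx.2.le⟩
  intro x hx
  rcases le_total x c with h | h
  · exact hga.trans (hmono ⟨le_rfl, hc.1⟩ ⟨hx.1, h⟩ hx.1)
  · exact hgb.trans (hanti ⟨h, hx.2⟩ ⟨hc.2, le_rfl⟩ hx.2)

lemma nonneg_of_deriv {g g' : ℝ → ℝ} (hd : ∀ x, HasDerivAt g (g' x) x) {b : ℝ}
    (h : ∀ x ∈ Set.Ioo 0 b, 0 ≤ g' x) (h0 : 0 ≤ g 0) : ∀ x ∈ Set.Icc 0 b, 0 ≤ g x := by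
  intro x hx
  exact h0.trans (mono_of_deriv hd h ⟨le_rfl, hx.1.trans hx.2⟩ hx hx.1)

/- ### Numeric facts -/

lemma hr2' : Real.sqrt 2 ^ 2 = 2 := Real.sq_sqrt (by norm_num)
lemma hr_lo : (1.4142135 : ℝ) < Real.sqrt 2 := by nlinarith [hr2', Real.sqrt_nonneg 2]
lemma hr_hi : Real.sqrt 2 < 1.4142136 := by nlinarith [hr2', Real.sqrt_nonneg 2]
lemma hKpos : 0 < π - 2*Real.sqrt 2 := by nlinarith [Real.pi_gt_d6, hr_hi]

/- ### The function F and its derivatives -/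

noncomputable def Fm (s : ℝ) : ℝ :=
  π*(2-Real.sqrt 2)*Real.sin s - s*(Real.sqrt 2*(4-π) + 2*(π-2*Real.sqrt 2)*Real.cos s)
noncomputable def Fm1 (s : ℝ) : ℝ :=
  π*(2-Real.sqrt 2)*Real.cos s - (Real.sqrt 2*(4-π) + 2*(π-2*Real.sqrt 2)*Real.cos s)
    + 2*(π-2*Real.sqrt 2)*s*Real.sin s
noncomputable def Fm2 (s : ℝ) : ℝ :=
  (π*(2+Real.sqrt 2) - 8*Real.sqrt 2)*Real.sin s + 2*(π-2*Real.sqrt 2)*s*Real.cos s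
noncomputable def Fm3 (s : ℝ) : ℝ :=
  (π*(4+Real.sqrt 2) - 12*Real.sqrt 2)*Real.cos s - 2*(π-2*Real.sqrt 2)*s*Real.sin s
noncomputable def Fm4 (s : ℝ) : ℝ :=
  -(π*(4+Real.sqrt 2) - 12*Real.sqrt 2)*Real.sin s
    - 2*(π-2*Real.sqrt 2)*(Real.sin s + s*Real.cos s)

lemma hdF : ∀ s, HasDerivAt Fm (Fm1 s) s := by
  intro s
  unfold Fm Fm1
  have h := ((Real.hasDerivAt_sin s).const_mul (π*(2-Real.sqrt 2))).sub
    ((hasDerivAt_id' s).mul (((Real.hasDerivAt_cos s).const_mul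
      (2*(π-2*Real.sqrt 2))).const_add (Real.sqrt 2*(4-π))))
  exact h.congr_deriv (by ring)

lemma hdF1 : ∀ s, HasDerivAt Fm1 (Fm2 s) s := by
  intro s
  unfold Fm1 Fm2
  have h := (((Real.hasDerivAt_cos s).const_mul (π*(2-Real.sqrt 2))).sub
    (((Real.hasDerivAt_cos s).const_mul (2*(π-2*Real.sqrt 2))).const_add
      (Real.sqrt 2*(4-π)))).add
    (((hasDerivAt_id' s).mul (Real.hasDerivAt_sin s)).const_mul (2*(π-2*Real.sqrt 2)))
  convert h using 1
  · rfl
  · rfl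
  · ext x; simp only [Pi.add_apply, Pi.sub_apply, Pi.mul_apply]; ring
  · ring

lemma hdF2 : ∀ s, HasDerivAt Fm2 (Fm3 s) s := by
  intro s
  unfold Fm2 Fm3
  have h := ((Real.hasDerivAt_sin s).const_mul (π*(2+Real.sqrt 2) - 8*Real.sqrt 2)).add
    (((hasDerivAt_id' s).mul (Real.hasDerivAt_cos s)).const_mul (2*(π-2*Real.sqrt 2)))
  convert h using 1
  · rfl
  · rfl
  · ext x; simp only [Pi.add_apply, Pi.sub_apply, Pi.mul_apply]; ring
  · ring

lemma hdF3 : ∀ s, HasDerivAt Fm3 (Fm4 s) s := by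
  intro s
  unfold Fm3 Fm4
  have h := ((Real.hasDerivAt_cos s).const_mul (π*(4+Real.sqrt 2) - 12*Real.sqrt 2)).sub
    (((hasDerivAt_id' s).mul (Real.hasDerivAt_sin s)).const_mul (2*(π-2*Real.sqrt 2)))
  convert h using 1
  · rfl
  · rfl
  · ext x; simp only [Pi.add_apply, Pi.sub_apply, Pi.mul_apply]; ring
  · ring

/- ### F is nonnegative on [0, π/4] -/

lemma F_nonneg : ∀ s ∈ Set.Icc 0 (π/4), 0 ≤ Fm s := by
  have hπ1 : (3.141592 : ℝ) < π := Real.pi_gt_d6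
  have hπ2 : π < 3.141593 := Real.pi_lt_d6
  have hb : (0:ℝ) ≤ π/4 := by linarith
  have hF3anti : AntitoneOn Fm3 (Set.Icc 0 (π/4)) := by
    apply anti_of_deriv hdF3
    intro x hx
    obtain ⟨hx1, hx2⟩ := hx
    have hs : 0 ≤ Real.sin x := Real.sin_nonneg_of_nonneg_of_le_pi hx1.le (by linarith)
    have hcn : 0 ≤ Real.cos x := Real.cos_nonneg_of_mem_Icc ⟨by linarith, by linarith⟩
    have hE : 0 < π*(4+Real.sqrt 2) - 12*Real.sqrt 2 := by nlinarith [hr_lo, hr_hi]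
    have := hKpos
    unfold Fm4
    nlinarith [mul_nonneg hx1.le hcn, mul_nonneg hE.le hs]
  have hF3_0 : 0 ≤ Fm3 0 := by
    unfold Fm3; rw [Real.sin_zero, Real.cos_zero]
    nlinarith [hr_lo, hr_hi]
  obtain ⟨c3, hc3, p3a, p3b⟩ := lemA hb hF3anti hF3_0
  have hF2_0 : 0 ≤ Fm2 0 := by
    unfold Fm2; rw [Real.sin_zero, Real.cos_zero]; ring_nf; exact le_rfl
  obtain ⟨c2, hc2, p2a, p2b⟩ := signChange hdF2 hc3 p3a p3b hF2_0
  have hF1_0 : 0 ≤ Fm1 0 := by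
    unfold Fm1; rw [Real.sin_zero, Real.cos_zero]; ring_nf; exact le_rfl
  obtain ⟨c1, hc1, p1a, p1b⟩ := signChange hdF1 hc2 p2a p2b hF1_0
  have hF_0 : 0 ≤ Fm 0 := by
    unfold Fm; rw [Real.sin_zero, Real.cos_zero]; ring_nf; exact le_rfl
  have hF_b : 0 ≤ Fm (π/4) := by
    unfold Fm; rw [Real.sin_pi_div_four, Real.cos_pi_div_four]
    have : π*(2-Real.sqrt 2)*(Real.sqrt 2/2)
        - (π/4)*(Real.sqrt 2*(4-π) + 2*(π-2*Real.sqrt 2)*(Real.sqrt 2/2)) = 0 := by ring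
    linarith
  exact finalNonneg hdF hc1 p1a p1b hF_0 hF_b

/- ### Cusa–Huygens -/

lemma cusa : ∀ s ∈ Set.Icc 0 (π/4), 3*Real.sin s ≤ s*(2+Real.cos s) := by
  have d2 : ∀ x : ℝ, HasDerivAt (fun s => Real.sin s - s*Real.cos s) (x*Real.sin x) x := by
    intro x
    have h := (Real.hasDerivAt_sin x).sub ((hasDerivAt_id' x).mul (Real.hasDerivAt_cos x))
    exact h.congr_deriv (by ring)
  have h2 : ∀ x ∈ Set.Icc 0 (π/4), 0 ≤ Real.sin x - x*Real.cos x := by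
    apply nonneg_of_deriv d2
    · intro x hx
      obtain ⟨hx1, hx2⟩ := hx
      have hs : 0 ≤ Real.sin x := Real.sin_nonneg_of_nonneg_of_le_pi hx1.le
        (by linarith [Real.pi_gt_d6])
      exact mul_nonneg hx1.le hs
    · simp
  have d1 : ∀ x : ℝ, HasDerivAt (fun s => 2 - 2*Real.cos s - s*Real.sin s)
      (Real.sin x - x*Real.cos x) x := by
    intro x
    have h := ((Real.hasDerivAt_cos x).const_mul (2:ℝ)).const_sub 2 |>.sub
      ((hasDerivAt_id' x).mul (Real.hasDerivAt_sin x))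
    exact h.congr_deriv (by ring)
  have h1 : ∀ x ∈ Set.Icc 0 (π/4), 0 ≤ 2 - 2*Real.cos x - x*Real.sin x := by
    apply nonneg_of_deriv d1
    · intro x hx; exact h2 x ⟨hx.1.le, hx.2.le⟩
    · simp
  have d0 : ∀ x : ℝ, HasDerivAt (fun s => s*(2+Real.cos s) - 3*Real.sin s)
      (2 - 2*Real.cos x - x*Real.sin x) x := by
    intro x
    have h := ((hasDerivAt_id' x).mul ((Real.hasDerivAt_cos x).const_add 2)).sub
      ((Real.hasDerivAt_sin x).const_mul (3:ℝ))
    exact h.congr_deriv (by ring)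
  have h0 : ∀ x ∈ Set.Icc 0 (π/4), 0 ≤ x*(2+Real.cos x) - 3*Real.sin x := by
    apply nonneg_of_deriv d0
    · intro x hx; exact h1 x ⟨hx.1.le, hx.2.le⟩
    · simp
  intro s hs
  linarith [h0 s hs]

/- ### Main theorem -/

set_option maxHeartbeats 2000000 in
theorem malesevic_chain (x : ℝ) (hx : 0 ≤ x) (hx' : x ≤ 1) :
    3 * x / (2 + Real.sqrt (1 - x ^ 2)) ≤
      6 * (Real.sqrt (1 + x) - Real.sqrt (1 - x)) /
        (4 + Real.sqrt (1 + x) + Real.sqrt (1 - x)) ∧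
    6 * (Real.sqrt (1 + x) - Real.sqrt (1 - x)) /
        (4 + Real.sqrt (1 + x) + Real.sqrt (1 - x)) ≤ Real.arcsin x ∧
    Real.arcsin x ≤ phiBound x ∧
    phiBound x ≤
      Real.pi * (Real.sqrt 2 + 1 / 2) * (Real.sqrt (1 + x) - Real.sqrt (1 - x)) /
        (4 + Real.sqrt (1 + x) + Real.sqrt (1 - x)) ∧
    Real.pi * (Real.sqrt 2 + 1 / 2) * (Real.sqrt (1 + x) - Real.sqrt (1 - x)) /
        (4 + Real.sqrt (1 + x) + Real.sqrt (1 - x)) ≤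
      Real.pi * x / (2 + Real.sqrt (1 - x ^ 2)) := by
  have hπ1 : (3.141592 : ℝ) < π := Real.pi_gt_d6
  have hπ2 : π < 3.141593 := Real.pi_lt_d6
  have hr2 : Real.sqrt 2 ^ 2 = 2 := hr2'
  have hrlo := hr_lo
  have hrhi := hr_hi
  have hK := hKpos
  set t := Real.arcsin x with ht
  have ht0 : 0 ≤ t := Real.arcsin_nonneg.2 hx
  have htp : t ≤ π/2 := Real.arcsin_le_pi_div_two x
  have hsin : Real.sin t = x := Real.sin_arcsin (by linarith) hx'
  set s := t/2 with hsdef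
  have hs0 : 0 ≤ s := by rw [hsdef]; linarith
  have hs4 : s ≤ π/4 := by rw [hsdef]; linarith
  set σ := Real.sin s with hσdef
  set c := Real.cos s with hcdef
  have hσ0 : 0 ≤ σ := Real.sin_nonneg_of_nonneg_of_le_pi hs0 (by linarith)
  have hc1 : c ≤ 1 := Real.cos_le_one s
  have pyth : σ^2 + c^2 = 1 := Real.sin_sq_add_cos_sq s
  have hcr : Real.sqrt 2/2 ≤ c := by
    have h := Real.cos_le_cos_of_nonneg_of_le_pi hs0 (by linarith) hs4
    rwa [Real.cos_pi_div_four] at h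
  have hc0 : 0 < c := by nlinarith
  have hσhi : σ ≤ Real.sqrt 2/2 := by
    have h := Real.strictMonoOn_sin.monotoneOn ⟨by linarith, by linarith⟩
      ⟨by linarith, by linarith⟩ hs4
    rwa [Real.sin_pi_div_four] at h
  have hσc : σ ≤ c := hσhi.trans hcr
  have hts : t = 2*s := by rw [hsdef]; ring
  have hsin2 : x = 2*σ*c := by rw [← hsin, hts, Real.sin_two_mul]
  have h1x : Real.sqrt (1+x) = c + σ := by
    rw [show (1:ℝ)+x = (c+σ)^2 by rw [hsin2]; linear_combination -pyth]
    exact Real.sqrt_sq (by linarith)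
  have h2x : Real.sqrt (1-x) = c - σ := by
    rw [show (1:ℝ)-x = (c-σ)^2 by rw [hsin2]; linear_combination -pyth]
    exact Real.sqrt_sq (by linarith)
  have h3x : Real.sqrt (1-x^2) = 2*c^2 - 1 := by
    rw [show (1:ℝ)-x^2 = (2*c^2-1)^2 by rw [hsin2]; linear_combination (-4*c^2)*pyth]
    exact Real.sqrt_sq (by nlinarith)
  have harc : t = 2*s := hts
  simp only [phiBound]
  rw [h1x, h2x, h3x, hsin2, harc]
  clear_value t s σ c
  clear ht hsdef hsin hsin2 h1x h2x h3x
  -- denominators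
  have den1 : (0:ℝ) < 2 + (2*c^2 - 1) := by nlinarith
  have den2 : (0:ℝ) < 4 + (c+σ) + (c-σ) := by linarith
  have denp : (0:ℝ) < Real.sqrt 2*(4-π) + 2*(π-2*Real.sqrt 2)*c := by
    have h1 : 0 < Real.sqrt 2*(4-π) := by nlinarith
    nlinarith
  have denφ : (0:ℝ) < Real.sqrt 2*(4-π)/(π-2*Real.sqrt 2) + (c+σ) + (c-σ) := by
    have h1 : 0 < Real.sqrt 2*(4-π)/(π-2*Real.sqrt 2) := by
      apply div_pos (by nlinarith) hK
    linarith
  have key : π * (2 - Real.sqrt 2) / (π - 2 * Real.sqrt 2) * ((c+σ) - (c-σ)) /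
      (Real.sqrt 2 * (4 - π) / (π - 2 * Real.sqrt 2) + (c+σ) + (c-σ)) =
      π * (2 - Real.sqrt 2) * (2*σ) / (Real.sqrt 2*(4-π) + 2*(π-2*Real.sqrt 2)*c) := by
    have e1 : Real.sqrt 2*(4-π)/(π-2*Real.sqrt 2) + (c+σ) + (c-σ)
        = (Real.sqrt 2*(4-π) + 2*(π-2*Real.sqrt 2)*c)/(π-2*Real.sqrt 2) := by
      rw [eq_div_iff hK.ne', add_mul, add_mul, div_mul_cancel₀ _ hK.ne']
      ring
    rw [e1, div_mul_eq_mul_div, div_div_div_cancel_right₀ hK.ne']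
    congr 1
    ring
  refine ⟨?_, ?_, ?_, ?_, ?_⟩
  · -- (1)
    rw [div_le_div_iff₀ den1 den2]
    nlinarith [mul_nonneg hσ0 (sq_nonneg (c-1))]
  · -- (2)
    rw [div_le_iff₀ den2]
    have hcu := cusa s ⟨hs0, hs4⟩
    rw [← hσdef, ← hcdef] at hcu
    nlinarith [hcu]
  · -- (3)
    rw [key, le_div_iff₀ denp]
    have hF := F_nonneg s ⟨hs0, hs4⟩
    unfold Fm at hF
    rw [← hσdef, ← hcdef] at hF
    nlinarith [hF]
  · -- (4)
    rw [key, div_le_div_iff₀ denp den2]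
    have hfac : (Real.sqrt 2+1/2)*(Real.sqrt 2*(4-π)+2*(π-2*Real.sqrt 2)*c)
        - (2-Real.sqrt 2)*(4+2*c)
        = (2*(π-2*Real.sqrt 2)*(Real.sqrt 2+1/2) - 2*(2-Real.sqrt 2))*(c - Real.sqrt 2/2) := by
      linear_combination (4 - 2*Real.sqrt 2) * hr2
    have hcoef : 0 ≤ 2*(π-2*Real.sqrt 2)*(Real.sqrt 2+1/2) - 2*(2-Real.sqrt 2) := by
      nlinarith [mul_pos (sub_pos.2 hπ1) (sub_pos.2 hrlo),
        mul_pos (sub_pos.2 hπ2) (sub_pos.2 hrhi)]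
    have hG : 0 ≤ (Real.sqrt 2+1/2)*(Real.sqrt 2*(4-π)+2*(π-2*Real.sqrt 2)*c)
        - (2-Real.sqrt 2)*(4+2*c) := by
      rw [hfac]; exact mul_nonneg hcoef (by linarith)
    nlinarith [mul_nonneg (mul_nonneg Real.pi_pos.le hσ0) hG]
  · -- (5)
    rw [div_le_div_iff₀ den2 den1]
    have h5 : (Real.sqrt 2+1/2)*(1+2*c^2) - 2*c*(2+c) ≤ 0 := by
      nlinarith [mul_nonneg (by linarith : (0:ℝ) ≤ c - Real.sqrt 2/2)
        (by linarith : (0:ℝ) ≤ 1 - c), hrlo, hrhi]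
    nlinarith [mul_nonneg (mul_nonneg Real.pi_pos.le hσ0) (by linarith : (0:ℝ) ≤ 2*c*(2+c) - (Real.sqrt 2+1/2)*(1+2*c^2))]
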